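/- Let 𝒰 be a cube partition of ℕ⁺ with cube colouring c_𝒰. If P = v₀v₁v₂... is an infinite directed path all of whose edges have colour r+1, then the sequence of indices of the partition classes containing v₀, v₁, v₂, ... is non-decreasing in the lexicographic order on ∏ᵢ{0,...,ℓᵢ−1}; consequently, all but finitely many vertices of P lie in a single partition class. -/

import Mathlib

/-- `k` is the least index at which the tuples `a` and `b` differ. -/
def LeastDiff {r : ℕ} {ℓ : Fin r → ℕ} (a b : ∀ i, Fin (ℓ i)) (k : Fin r) : Prop :=
  a k ≠ b k ∧ ∀ k' : Fin r, k' < k → a k' = b k'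

/-- `c` is the cube colouring associated to the cube partition whose classes are
the fibres of `f`. -/
def IsCubeColouring {r : ℕ} {ℓ : Fin r → ℕ} (f : ℕ → ∀ i, Fin (ℓ i))
    (c : ℕ → ℕ → Fin (r + 1)) : Prop :=
  ∀ m n : ℕ, m ≠ n →
    (f m = f n → c m n = Fin.last r) ∧
    ∀ k : Fin r, LeastDiff (f m) (f n) k →
      (f m k < f n k → c m n = Fin.last r) ∧
      (f n k < f m k → c m n = k.castSucc)

/-- `a ≤ b` in the lexicographic order on the cube `∏ i, {0, …, ℓ i - 1}`. -/
def LexLE {r : ℕ} {ℓ : Fin r → ℕ} (a b : ∀ i, Fin (ℓ i)) : Prop :=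
  a = b ∨ ∃ k : Fin r, a k < b k ∧ ∀ k' : Fin r, k' < k → a k' = b k'

lemma lexle_toLex {r : ℕ} {ℓ : Fin r → ℕ} {a b : ∀ i, Fin (ℓ i)} (h : LexLE a b) :
    toLex a ≤ toLex b := by
  rcases h with h | ⟨k, hk, hk'⟩
  · exact le_of_eq (congrArg _ h)
  · exact le_of_lt ⟨k, fun j hj => hk' j hj, hk⟩

/-- For the cube colouring on a cube partition, the sequence of class indices
along an infinite directed path in colour `r + 1` is non-decreasing in the
lexicographic order; consequently, all but finitely many vertices of the path
lie in a single partition class. -/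
theorem stmt12 (r : ℕ) (ℓ : Fin r → ℕ) (f : ℕ → ∀ i, Fin (ℓ i))
    (c : ℕ → ℕ → Fin (r + 1)) (hc : IsCubeColouring f c)
    (v : ℕ → ℕ) (hv : Function.Injective v)
    (hcol : ∀ i : ℕ, c (v i) (v (i + 1)) = Fin.last r) :
    (∀ n : ℕ, LexLE (f (v n)) (f (v (n + 1)))) ∧
    ∃ (x : ∀ i, Fin (ℓ i)) (N : ℕ), ∀ n ≥ N, f (v n) = x := by
  have step : ∀ n : ℕ, LexLE (f (v n)) (f (v (n + 1))) := by
    intro n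
    by_cases h : f (v n) = f (v (n + 1))
    · exact Or.inl h
    · have hne : v n ≠ v (n + 1) := fun h' => by
        have := hv h'; omega
      -- find least differing index
      have hex : ∃ k, f (v n) k ≠ f (v (n + 1)) k := Function.ne_iff.mp h
      classical
      set s : Finset (Fin r) := Finset.univ.filter (fun k => f (v n) k ≠ f (v (n + 1)) k) with hs
      have hsne : s.Nonempty := by
        obtain ⟨k, hk⟩ := hex
        exact ⟨k, by simp [hs, hk]⟩
      set k := s.min' hsne with hkdef
      have hkmem : k ∈ s := s.min'_mem hsne
      have hkne : f (v n) k ≠ f (v (n + 1)) k := by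
        simpa [hs] using hkmem
      have hleast : ∀ k' : Fin r, k' < k → f (v n) k' = f (v (n + 1)) k' := by
        intro k' hk'
        by_contra hne'
        have : k ≤ k' := s.min'_le k' (by simp [hs, hne'])
        exact absurd hk' (not_lt.mpr this)
      have hLD : LeastDiff (f (v n)) (f (v (n + 1))) k := ⟨hkne, hleast⟩
      have hc2 := ((hc (v n) (v (n + 1)) hne).2 k hLD)
      rcases lt_trichotomy (f (v n) k) (f (v (n + 1)) k) with hlt | heq | hgt
      · exact Or.inr ⟨k, hlt, hleast⟩
      · exact absurd heq hkne
      · exfalso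
        have h1 := hc2.2 hgt
        have h2 := hcol n
        rw [h1] at h2
        exact absurd h2 (Fin.castSucc_lt_last k).ne
  refine ⟨step, ?_⟩
  classical
  haveI inst1 : Fintype (Lex (∀ i, Fin (ℓ i))) := Fintype.ofEquiv _ toLex
  haveI inst2 : Finite (Lex (∀ i, Fin (ℓ i))) := Finite.of_fintype _
  set g : ℕ → Lex (∀ i, Fin (ℓ i)) := fun n => toLex (f (v n)) with hg
  have hmono : Monotone g := monotone_nat_of_le_succ fun n => lexle_toLex (step n)
  have hfin : (Set.range g).Finite := Set.Finite.subset Set.finite_univ (Set.subset_univ _)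
  obtain ⟨m, hm, hmax⟩ := Set.Finite.exists_maximalFor id _ hfin ⟨g 0, 0, rfl⟩
  obtain ⟨N, hN⟩ := hm
  refine ⟨ofLex (g N), N, fun n hn => ?_⟩
  have h1 : g N ≤ g n := hmono hn
  have h2 : g N = g n := by
    rw [hN]
    have h1' : m ≤ g n := hN ▸ h1
    exact le_antisymm h1' (hmax ⟨n, rfl⟩ h1')
  have : toLex (f (v n)) = g N := h2.symm
  exact congrArg ofLex this
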